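/- arXiv:2509.11737 — 4 statements merged into one kernel-verified Lean document; each statement's English description precedes it below -/
import Mathlib

section
/- Let α ∈ (0, 1/2) and let 0 < v < u. Then ∫_0^v x^{−2α} (u − x)^{α−1} (v − x)^{α−1} dx = B(α, 1 − 2α) · (uv)^{−α} · (u − v)^{2α−1}, where B(·,·) denotes the Euler Beta function. -/
open MeasureTheory

/-- The Euler Beta function, `B(a,b) = Γ(a)Γ(b)/Γ(a+b)`. -/
noncomputable def eulerBeta (a b : ℝ) : ℝ := Real.Gamma a * Real.Gamma b / Real.Gamma (a + b)

lemma real_beta_integral {a b : ℝ} (ha : 0 < a) (hb : 0 < b) :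
    ∫ t in Set.Ioo (0:ℝ) 1, t ^ (a-1) * (1-t) ^ (b-1) = eulerBeta a b := by
  have key := Complex.Gamma_mul_Gamma_eq_betaIntegral (s := (a:ℂ)) (t := (b:ℂ))
    (by simpa using ha) (by simpa using hb)
  have hbeta : Complex.betaIntegral a b
      = ((∫ t in (0:ℝ)..1, t ^ (a-1) * (1-t) ^ (b-1) : ℝ) : ℂ) := by
    rw [Complex.betaIntegral, ← intervalIntegral.integral_ofReal]
    refine intervalIntegral.integral_congr fun x hx => ?_
    rw [Set.uIcc_of_le (by norm_num)] at hx
    have e1 := Complex.ofReal_cpow hx.1 (a-1)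
    have e2 := Complex.ofReal_cpow (show (0:ℝ) ≤ 1 - x by linarith [hx.2]) (b-1)
    push_cast at e1 e2 ⊢
    rw [← e1, ← e2]
  rw [hbeta, Complex.Gamma_ofReal, Complex.Gamma_ofReal, ← Complex.ofReal_add,
    Complex.Gamma_ofReal, ← Complex.ofReal_mul, ← Complex.ofReal_mul,
    Complex.ofReal_inj] at key
  have h1 : ∫ t in Set.Ioo (0:ℝ) 1, t ^ (a-1) * (1-t) ^ (b-1)
      = ∫ t in (0:ℝ)..1, t ^ (a-1) * (1-t) ^ (b-1) := by
    rw [intervalIntegral.integral_of_le (by norm_num), ← integral_Ioc_eq_integral_Ioo]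
  have hG : Real.Gamma (a + b) ≠ 0 := (Real.Gamma_pos_of_pos (by linarith)).ne'
  rw [h1, eulerBeta]
  field_simp
  linarith [key]

/-- For `α ∈ (0,1/2)` and `0 < v < u`, one has
`∫_0^v x^{-2α} (u-x)^{α-1} (v-x)^{α-1} dx = B(α, 1-2α) (uv)^{-α} (u-v)^{2α-1}`. -/
theorem integral_eq_beta_mul (α u v : ℝ) (hα : α ∈ Set.Ioo (0 : ℝ) (1 / 2))
    (hv : 0 < v) (huv : v < u) :
    ∫ x in Set.Ioo (0 : ℝ) v, x ^ (-(2 * α)) * (u - x) ^ (α - 1) * (v - x) ^ (α - 1) =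
      eulerBeta α (1 - 2 * α) * (u * v) ^ (-α) * (u - v) ^ (2 * α - 1) := by
  obtain ⟨hα0, hα2⟩ := hα
  have hu : 0 < u := hv.trans huv
  have huv' : 0 < u - v := by linarith
  set φ : ℝ → ℝ := fun t => u * v * (1 - t) / (u - t * v) with hφ
  set φ' : ℝ → ℝ := fun t => u * v * (v - u) / (u - t * v) ^ 2 with hφ'
  have hA : ∀ t ∈ Set.Ioo (0:ℝ) 1, 0 < u - t * v := by
    rintro t ⟨ht0, ht1⟩
    nlinarith
  have himg : φ '' Set.Ioo 0 1 = Set.Ioo 0 v := by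
    ext x
    constructor
    · rintro ⟨t, ht, rfl⟩
      have hA' := hA t ht
      obtain ⟨ht0, ht1⟩ := ht
      constructor
      · exact div_pos (by nlinarith [mul_pos (mul_pos hu hv) (show (0:ℝ) < 1 - t by linarith)]) hA'
      · rw [div_lt_iff₀ hA']
        nlinarith [mul_pos (mul_pos ht0 hv) huv']
    · rintro ⟨hx0, hxv⟩
      refine ⟨u * (v - x) / (v * (u - x)), ⟨?_, ?_⟩, ?_⟩
      · apply div_pos (by nlinarith) (by nlinarith)
      · rw [div_lt_one (by nlinarith)]
        nlinarith
      · have hux : u - x ≠ 0 := by nlinarith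
        have hd : v * (u - x) ≠ 0 := by nlinarith
        have hA2 : u - u * (v - x) / (v * (u - x)) * v = u * (u - v) / (u - x) := by
          field_simp
          ring
        have hpos : (0:ℝ) < u * (u - v) / (u - x) := by
          apply div_pos (by nlinarith) (by nlinarith)
        rw [hφ]
        simp only
        rw [hA2, div_eq_iff hpos.ne']
        field_simp
        ring
  have hderiv : ∀ t ∈ Set.Ioo (0:ℝ) 1, HasDerivWithinAt φ (φ' t) (Set.Ioo 0 1) t := by
    intro t ht
    have hA' := hA t ht
    have h1 : HasDerivAt (fun t : ℝ => u * v * (1 - t)) (-(u * v)) t := by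
      simpa using ((hasDerivAt_id t).const_sub 1).const_mul (u * v)
    have h2 : HasDerivAt (fun t : ℝ => u - t * v) (-v) t := by
      simpa using ((hasDerivAt_id t).mul_const v).const_sub u
    have := (h1.div h2 hA'.ne')
    apply HasDerivAt.hasDerivWithinAt
    refine this.congr_deriv ?_
    rw [hφ']
    field_simp
    ring
  have hinj : Set.InjOn φ (Set.Ioo 0 1) := by
    intro t1 ht1 t2 ht2 h
    have hA1 := hA t1 ht1
    have hA2 := hA t2 ht2
    rw [hφ] at h
    simp only at h
    rw [div_eq_div_iff hA1.ne' hA2.ne'] at h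
    have : (t1 - t2) * (u - v) * (u * v) = 0 := by nlinarith [h]
    have h2 : t1 - t2 = 0 := by
      rcases mul_eq_zero.1 this with h' | h'
      · rcases mul_eq_zero.1 h' with h'' | h''
        · exact h''
        · nlinarith
      · nlinarith
    linarith
  rw [← himg, integral_image_eq_integral_abs_deriv_smul measurableSet_Ioo hderiv hinj]
  have hcong : ∀ t ∈ Set.Ioo (0:ℝ) 1,
      |φ' t| • (φ t ^ (-(2 * α)) * (u - φ t) ^ (α - 1) * (v - φ t) ^ (α - 1))
        = (u * v) ^ (-α) * (u - v) ^ (2 * α - 1) * (t ^ (α - 1) * (1 - t) ^ (1 - 2 * α - 1)) := by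
    intro t ht
    have hA' := hA t ht
    obtain ⟨ht0, ht1⟩ := ht
    have h1t : (0:ℝ) < 1 - t := by linarith
    have hx : φ t = u * v * (1 - t) / (u - t * v) := rfl
    have hux : u - φ t = u * (u - v) / (u - t * v) := by
      rw [hx, eq_div_iff hA'.ne', sub_mul, div_mul_cancel₀ _ hA'.ne']; ring
    have hvx : v - φ t = t * v * (u - v) / (u - t * v) := by
      rw [hx, eq_div_iff hA'.ne', sub_mul, div_mul_cancel₀ _ hA'.ne']; ring
    have habs : |φ' t| = u * v * (u - v) / (u - t * v) ^ 2 := by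
      rw [hφ']
      simp only
      rw [abs_div, abs_of_nonpos (by nlinarith [mul_pos (mul_pos hu hv) huv']), abs_of_pos (by positivity)]
      ring
    have hp1 : (0:ℝ) < u * v * (1 - t) / (u - t * v) :=
      div_pos (mul_pos (mul_pos hu hv) h1t) hA'
    have hp2 : (0:ℝ) < u * (u - v) / (u - t * v) := div_pos (mul_pos hu huv') hA'
    have hp3 : (0:ℝ) < t * v * (u - v) / (u - t * v) :=
      div_pos (mul_pos (mul_pos ht0 hv) huv') hA'
    have hp4 : (0:ℝ) < u * v := mul_pos hu hv
    have n1 : u ≠ 0 := hu.ne'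
    have n2 : v ≠ 0 := hv.ne'
    have n3 : t ≠ 0 := ht0.ne'
    have n4 : 1 - t ≠ 0 := h1t.ne'
    have n5 : u - v ≠ 0 := huv'.ne'
    have n6 : u - t * v ≠ 0 := hA'.ne'
    have n7 : u * v ≠ 0 := hp4.ne'
    have n8 : u * v * (1 - t) ≠ 0 := (mul_pos hp4 h1t).ne'
    have n9 : u * (u - v) ≠ 0 := (mul_pos hu huv').ne'
    have n10 : t * v ≠ 0 := (mul_pos ht0 hv).ne'
    have n11 : t * v * (u - v) ≠ 0 := (mul_pos (mul_pos ht0 hv) huv').ne'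
    have n12 : u * v * (u - v) ≠ 0 := (mul_pos hp4 huv').ne'
    have n13 : (u - t * v) ^ 2 ≠ 0 := (pow_pos hA' 2).ne'
    rw [smul_eq_mul, habs, hx, hux, hvx]
    have hLpos : (0:ℝ) < u * v * (u - v) / (u - t * v) ^ 2 *
        ((u * v * (1 - t) / (u - t * v)) ^ (-(2 * α)) *
        (u * (u - v) / (u - t * v)) ^ (α - 1) *
        (t * v * (u - v) / (u - t * v)) ^ (α - 1)) :=
      mul_pos (div_pos (mul_pos hp4 huv') (pow_pos hA' 2))
        (mul_pos (mul_pos (Real.rpow_pos_of_pos hp1 _) (Real.rpow_pos_of_pos hp2 _))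
        (Real.rpow_pos_of_pos hp3 _))
    have hRpos : (0:ℝ) < (u * v) ^ (-α) * (u - v) ^ (2 * α - 1) *
        (t ^ (α - 1) * (1 - t) ^ (1 - 2 * α - 1)) :=
      mul_pos (mul_pos (Real.rpow_pos_of_pos hp4 _) (Real.rpow_pos_of_pos huv' _))
        (mul_pos (Real.rpow_pos_of_pos ht0 _) (Real.rpow_pos_of_pos h1t _))
    have n14 : u * v * (u - v) / (u - t * v) ^ 2 ≠ 0 :=
      (div_pos (mul_pos hp4 huv') (pow_pos hA' 2)).ne'
    have n15 : u * v * (1 - t) / (u - t * v) ≠ 0 := hp1.ne'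
    have n16 : u * (u - v) / (u - t * v) ≠ 0 := hp2.ne'
    have n17 : t * v * (u - v) / (u - t * v) ≠ 0 := hp3.ne'
    have m1 : (u * v * (1 - t) / (u - t * v)) ^ (-(2 * α)) ≠ 0 :=
      (Real.rpow_pos_of_pos hp1 _).ne'
    have m2 : (u * (u - v) / (u - t * v)) ^ (α - 1) ≠ 0 := (Real.rpow_pos_of_pos hp2 _).ne'
    have m3 : (t * v * (u - v) / (u - t * v)) ^ (α - 1) ≠ 0 := (Real.rpow_pos_of_pos hp3 _).ne'
    have m4 : (u * v * (1 - t) / (u - t * v)) ^ (-(2 * α)) *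
        (u * (u - v) / (u - t * v)) ^ (α - 1) ≠ 0 := mul_ne_zero m1 m2
    have m11 : (u * v * (1 - t) / (u - t * v)) ^ (-(2 * α)) *
        (u * (u - v) / (u - t * v)) ^ (α - 1) *
        (t * v * (u - v) / (u - t * v)) ^ (α - 1) ≠ 0 := mul_ne_zero m4 m3
    have m5 : (u * v) ^ (-α) ≠ 0 := (Real.rpow_pos_of_pos hp4 _).ne'
    have m6 : (u - v) ^ (2 * α - 1) ≠ 0 := (Real.rpow_pos_of_pos huv' _).ne'
    have m7 : t ^ (α - 1) ≠ 0 := (Real.rpow_pos_of_pos ht0 _).ne'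
    have m8 : (1 - t) ^ (1 - 2 * α - 1) ≠ 0 := (Real.rpow_pos_of_pos h1t _).ne'
    have m9 : (u * v) ^ (-α) * (u - v) ^ (2 * α - 1) ≠ 0 := mul_ne_zero m5 m6
    have m10 : t ^ (α - 1) * (1 - t) ^ (1 - 2 * α - 1) ≠ 0 := mul_ne_zero m7 m8
    rw [← Real.exp_log hLpos, ← Real.exp_log hRpos]
    congr 1
    simp (disch := assumption) only [Real.log_mul, Real.log_div, Real.log_rpow, Real.log_pow]
    push_cast
    ring
  rw [setIntegral_congr_fun measurableSet_Ioo hcong, integral_const_mul,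
    real_beta_integral hα0 (by linarith)]
  ring
end

section
/- Let H ∈ (1/2, 1), k ∈ ℕ, T > 0, and set a := 1/2 − (1−H)/k. Then for all u, v ∈ (0, T] with u ≠ v, one has ( (uv)^a · ∫_0^{min(u,v)} x^{−2a} (u − x)^{a−1} (v − x)^{a−1} dx )^k = B(a, 1 − 2a)^k · |u − v|^{2H − 2}, where B(·,·) is the Euler Beta function. (Note 1 − 2a = 2(1−H)/k and a − 1 = −(1/2 + (1−H)/k).) -/
open MeasureTheory

/-- The exponent `a = 1/2 - (1-H)/k` appearing in the kernel of the Hermite process. -/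
noncomputable def aHk (H : ℝ) (k : ℕ) : ℝ := 1 / 2 - (1 - H) / k

lemma eulerBeta_symm (a b : ℝ) : eulerBeta a b = eulerBeta b a := by
  rw [eulerBeta, eulerBeta, mul_comm, add_comm]

lemma real_betaIntegral {p q : ℝ} (hp : 0 < p) (hq : 0 < q) :
    ∫ x in Set.Ioo (0:ℝ) 1, x ^ (p - 1) * (1 - x) ^ (q - 1) = eulerBeta p q := by
  have hpc : 0 < (p : ℂ).re := by simpa using hp
  have hqc : 0 < (q : ℂ).re := by simpa using hq
  have hG := Complex.Gamma_mul_Gamma_eq_betaIntegral hpc hqc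
  have hB : Complex.betaIntegral p q
      = ((∫ x in Set.Ioo (0:ℝ) 1, x ^ (p - 1) * (1 - x) ^ (q - 1) : ℝ) : ℂ) := by
    rw [Complex.betaIntegral, intervalIntegral.integral_of_le zero_le_one,
      MeasureTheory.integral_Ioc_eq_integral_Ioo]
    refine Eq.trans (setIntegral_congr_fun measurableSet_Ioo fun x hx => ?_) integral_ofReal
    show (x:ℂ) ^ ((p:ℂ) - 1) * (1 - (x:ℂ)) ^ ((q:ℂ) - 1)
        = Complex.ofReal (x ^ (p - 1) * (1 - x) ^ (q - 1))
    rw [Complex.ofReal_mul, Complex.ofReal_cpow hx.1.le,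
      Complex.ofReal_cpow (by linarith [hx.2] : (0:ℝ) ≤ 1 - x)]
    push_cast
    ring
  rw [hB, ← Complex.ofReal_add, Complex.Gamma_ofReal, Complex.Gamma_ofReal,
    Complex.Gamma_ofReal, ← Complex.ofReal_mul, ← Complex.ofReal_mul] at hG
  have h := Complex.ofReal_injective hG
  have hGpq : Real.Gamma (p + q) ≠ 0 := (Real.Gamma_pos_of_pos (by linarith)).ne'
  rw [eulerBeta, eq_div_iff hGpq]
  linarith [h]

lemma pointwise_id {a u v s : ℝ} (hu : 0 < u) (huv : u < v) (hs0 : 0 < s) (hs1 : s < 1) :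
    u * v * (v - u) / (v - u + u * s) ^ 2 *
      ((u * v * s / (v - u + u * s)) ^ (-(2 * a)) *
        (u * (v - u) * (1 - s) / (v - u + u * s)) ^ (a - 1) *
        (v * (v - u) / (v - u + u * s)) ^ (a - 1))
    = (u * v) ^ (-a) * (v - u) ^ (2 * a - 1) * (s ^ (-(2 * a)) * (1 - s) ^ (a - 1)) := by
  have hv : 0 < v := hu.trans huv
  have hvu : 0 < v - u := by linarith
  have h1s : 0 < 1 - s := by linarith
  have hD : 0 < v - u + u * s := by positivity
  have e1 : (u * v * s / (v - u + u * s)) ^ (-(2 * a))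
      = Real.exp ((Real.log u + Real.log v + Real.log s - Real.log (v - u + u * s)) * (-(2 * a))) := by
    rw [Real.rpow_def_of_pos (by positivity), Real.log_div (by positivity) hD.ne',
      Real.log_mul (by positivity) hs0.ne', Real.log_mul hu.ne' hv.ne']
  have e2 : (u * (v - u) * (1 - s) / (v - u + u * s)) ^ (a - 1)
      = Real.exp ((Real.log u + Real.log (v - u) + Real.log (1 - s) - Real.log (v - u + u * s)) * (a - 1)) := by
    rw [Real.rpow_def_of_pos (by positivity), Real.log_div (by positivity) hD.ne',
      Real.log_mul (by positivity) h1s.ne', Real.log_mul hu.ne' hvu.ne']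
  have e3 : (v * (v - u) / (v - u + u * s)) ^ (a - 1)
      = Real.exp ((Real.log v + Real.log (v - u) - Real.log (v - u + u * s)) * (a - 1)) := by
    rw [Real.rpow_def_of_pos (by positivity), Real.log_div (by positivity) hD.ne',
      Real.log_mul hv.ne' hvu.ne']
  have e4 : (u * v) ^ (-a) = Real.exp ((Real.log u + Real.log v) * (-a)) := by
    rw [Real.rpow_def_of_pos (by positivity), Real.log_mul hu.ne' hv.ne']
  have e5 : (v - u) ^ (2 * a - 1) = Real.exp (Real.log (v - u) * (2 * a - 1)) :=
    Real.rpow_def_of_pos hvu _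
  have e6 : s ^ (-(2 * a)) = Real.exp (Real.log s * (-(2 * a))) := Real.rpow_def_of_pos hs0 _
  have e7 : (1 - s) ^ (a - 1) = Real.exp (Real.log (1 - s) * (a - 1)) := Real.rpow_def_of_pos h1s _
  rw [e1, e2, e3, e4, e5, e6, e7, ← Real.exp_add, ← Real.exp_add, ← Real.exp_add,
    ← Real.exp_add, ← Real.exp_add]
  have key : ((Real.log u + Real.log v + Real.log s - Real.log (v - u + u * s)) * (-(2 * a))
        + (Real.log u + Real.log (v - u) + Real.log (1 - s) - Real.log (v - u + u * s)) * (a - 1)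
        + (Real.log v + Real.log (v - u) - Real.log (v - u + u * s)) * (a - 1))
      = ((Real.log u + Real.log v) * (-a) + Real.log (v - u) * (2 * a - 1)
          + (Real.log s * (-(2 * a)) + Real.log (1 - s) * (a - 1)))
        + (2 * Real.log (v - u + u * s) - Real.log u - Real.log v - Real.log (v - u)) := by
    ring
  rw [key, Real.exp_add, Real.exp_sub, Real.exp_sub, Real.exp_sub,
    Real.exp_log hu, Real.exp_log hv, Real.exp_log hvu]
  have h2D : Real.exp (2 * Real.log (v - u + u * s)) = (v - u + u * s) ^ 2 := by
    rw [two_mul, Real.exp_add, Real.exp_log hD, sq]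
  rw [h2D]
  field_simp

lemma integral_eq {a u v : ℝ} (hu : 0 < u) (huv : u < v) :
    ∫ x in Set.Ioo (0:ℝ) u, x ^ (-(2 * a)) * (u - x) ^ (a - 1) * (v - x) ^ (a - 1)
      = (∫ s in Set.Ioo (0:ℝ) 1, s ^ ((1 - 2 * a) - 1) * (1 - s) ^ (a - 1))
          * ((u * v) ^ (-a) * (v - u) ^ (2 * a - 1)) := by
  have hv : 0 < v := hu.trans huv
  have hvu : 0 < v - u := by linarith
  set f : ℝ → ℝ := fun s => u * v * s / (v - u + u * s) with hf
  have hD : ∀ s : ℝ, 0 < s → 0 < v - u + u * s := fun s hs => by positivity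
  have himg : f '' Set.Ioo 0 1 = Set.Ioo 0 u := by
    ext x
    constructor
    · rintro ⟨s, ⟨hs0, hs1⟩, rfl⟩
      have hDs := hD s hs0
      constructor
      · have : 0 < u * v * s := by positivity
        positivity
      · rw [div_lt_iff₀ hDs]
        nlinarith [mul_pos (mul_pos hu hvu) (show (0:ℝ) < 1 - s by linarith)]
    · rintro ⟨hx0, hxu⟩
      have hvx : 0 < v - x := by linarith
      refine ⟨x * (v - u) / (u * (v - x)), ⟨by positivity, ?_⟩, ?_⟩
      · rw [div_lt_one (by positivity)]
        nlinarith
      · have hDpos : 0 < v - u + u * (x * (v - u) / (u * (v - x))) := by positivity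
        simp only [hf]
        rw [div_eq_iff hDpos.ne']
        field_simp
        ring
  have hinj : Set.InjOn f (Set.Ioo 0 1) := by
    rintro s ⟨hs0, hs1⟩ t ⟨ht0, ht1⟩ h
    have hDs := hD s hs0
    have hDt := hD t ht0
    simp only [hf] at h
    rw [div_eq_div_iff hDs.ne' hDt.ne'] at h
    have h2 : u * v * (v - u) * s = u * v * (v - u) * t := by nlinarith [h]
    exact mul_left_cancel₀ (by positivity) h2
  have hderiv : ∀ s ∈ Set.Ioo (0:ℝ) 1,
      HasDerivWithinAt f (u * v * (v - u) / (v - u + u * s) ^ 2) (Set.Ioo 0 1) s := by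
    rintro s ⟨hs0, hs1⟩
    have hDs := hD s hs0
    have h1 : HasDerivAt (fun s : ℝ => u * v * s) (u * v) s := by
      simpa using (hasDerivAt_id s).const_mul (u * v)
    have h2 : HasDerivAt (fun s : ℝ => v - u + u * s) u s := by
      simpa using ((hasDerivAt_id s).const_mul u).const_add (v - u)
    have := h1.div h2 hDs.ne'
    refine this.hasDerivWithinAt.congr_deriv ?_
    ring
  rw [← himg, integral_image_eq_integral_abs_deriv_smul measurableSet_Ioo hderiv hinj]
  rw [show (∫ s in Set.Ioo (0:ℝ) 1, s ^ ((1 - 2*a) - 1) * (1 - s) ^ (a - 1))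
        * ((u * v) ^ (-a) * (v - u) ^ (2 * a - 1))
      = ∫ s in Set.Ioo (0:ℝ) 1,
          (u * v) ^ (-a) * (v - u) ^ (2 * a - 1) * (s ^ (-(2*a)) * (1 - s) ^ (a - 1)) from ?_]
  · refine setIntegral_congr_fun measurableSet_Ioo fun s hs => ?_
    obtain ⟨hs0, hs1⟩ := hs
    have hDs := hD s hs0
    have h1s : 0 < 1 - s := by linarith
    have hux : u - f s = u * (v - u) * (1 - s) / (v - u + u * s) := by
      simp only [hf]; field_simp; ring
    have hvx : v - f s = v * (v - u) / (v - u + u * s) := by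
      simp only [hf]; field_simp; ring
    have habs : |u * v * (v - u) / (v - u + u * s) ^ 2| = u * v * (v - u) / (v - u + u * s) ^ 2 :=
      abs_of_pos (by positivity)
    rw [smul_eq_mul, habs, hux, hvx]
    linear_combination pointwise_id (a := a) hu huv hs0 hs1
  · rw [mul_comm, ← integral_const_mul]
    refine setIntegral_congr_fun measurableSet_Ioo fun s hs => ?_
    rw [show (1 - 2*a) - 1 = -(2*a) by ring]

lemma main_lt {H : ℝ} {k : ℕ} (hH : H ∈ Set.Ioo (1 / 2 : ℝ) 1) (hk : 0 < k)
    {u v : ℝ} (hu : 0 < u) (huv : u < v) :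
    ((u * v) ^ aHk H k *
        ∫ x in Set.Ioo (0 : ℝ) (min u v),
          x ^ (-(2 * aHk H k)) * (u - x) ^ (aHk H k - 1) * (v - x) ^ (aHk H k - 1)) ^ k =
      eulerBeta (aHk H k) (1 - 2 * aHk H k) ^ k * |u - v| ^ (2 * H - 2) := by
  obtain ⟨hH1, hH2⟩ := hH
  set a := aHk H k with ha
  have hk1 : (1 : ℝ) ≤ (k : ℝ) := by exact_mod_cast hk
  have hdiv : (1 - H) / (k : ℝ) ≤ 1 - H := by
    rw [div_le_iff₀ (by linarith)]
    nlinarith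
  have hdiv0 : 0 < (1 - H) / (k : ℝ) := div_pos (by linarith) (by linarith)
  have ha0 : 0 < a := by rw [ha, aHk]; linarith
  have ha2 : a < 1 / 2 := by rw [ha, aHk]; linarith
  have hvu : 0 < v - u := by linarith
  have hmin : min u v = u := min_eq_left huv.le
  rw [hmin, integral_eq hu huv,
    real_betaIntegral (by linarith : (0:ℝ) < 1 - 2 * a) ha0]
  have habs : |u - v| = v - u := by rw [abs_sub_comm]; exact abs_of_pos hvu
  have hcancel : (u * v) ^ a * (u * v) ^ (-a) = 1 := by
    rw [← Real.rpow_add (mul_pos hu (hu.trans huv))]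
    norm_num
  have hstep : (u * v) ^ a * (eulerBeta (1 - 2 * a) a * ((u * v) ^ (-a) * (v - u) ^ (2 * a - 1)))
      = eulerBeta a (1 - 2 * a) * (v - u) ^ (2 * a - 1) := by
    rw [eulerBeta_symm]
    calc (u * v) ^ a * (eulerBeta a (1 - 2 * a) * ((u * v) ^ (-a) * (v - u) ^ (2 * a - 1)))
        = ((u * v) ^ a * (u * v) ^ (-a)) * (eulerBeta a (1 - 2 * a) * (v - u) ^ (2 * a - 1)) := by
          ring
      _ = eulerBeta a (1 - 2 * a) * (v - u) ^ (2 * a - 1) := by rw [hcancel, one_mul]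
  have hkne : (k : ℝ) ≠ 0 := by linarith
  have hexp : (2 * a - 1) * (k : ℝ) = 2 * H - 2 := by
    rw [ha, aHk]; field_simp; ring
  rw [hstep, mul_pow, habs, ← Real.rpow_natCast ((v - u) ^ (2 * a - 1)) k,
    ← Real.rpow_mul hvu.le, hexp]

/-- For `H ∈ (1/2,1)`, `k ∈ ℕ`, `a = 1/2 - (1-H)/k` and `u, v ∈ (0,T]` with `u ≠ v`,
`((uv)^a ∫_0^{u∧v} x^{-2a} (u-x)^{a-1} (v-x)^{a-1} dx)^k = B(a, 1-2a)^k |u-v|^{2H-2}`. -/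
theorem kernel_integral_pow_eq (T H : ℝ) (k : ℕ) (hT : 0 < T)
    (hH : H ∈ Set.Ioo (1 / 2 : ℝ) 1) (hk : 0 < k)
    (u v : ℝ) (hu : u ∈ Set.Ioc (0 : ℝ) T) (hv : v ∈ Set.Ioc (0 : ℝ) T) (huv : u ≠ v) :
    ((u * v) ^ aHk H k *
        ∫ x in Set.Ioo (0 : ℝ) (min u v),
          x ^ (-(2 * aHk H k)) * (u - x) ^ (aHk H k - 1) * (v - x) ^ (aHk H k - 1)) ^ k =
      eulerBeta (aHk H k) (1 - 2 * aHk H k) ^ k * |u - v| ^ (2 * H - 2) := by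
  rcases lt_or_gt_of_ne huv with h | h
  · exact main_lt hH hk hu.1 h
  · have hmain := main_lt hH hk hv.1 h
    rw [min_comm, abs_sub_comm, mul_comm v u] at hmain
    rw [← hmain]
    congr 2
    refine setIntegral_congr_fun measurableSet_Ioo fun x hx => ?_
    ring
end

section
/- Let T ∈ (0, ∞), a ∈ (0, 1), ϑ ≥ 0, and ε ∈ (ϑ, a + ϑ). Then there exists a finite constant C = C(T, a, ϑ, ε) such that for every x ∈ (0, T), ∫_0^T (y + x)^{−(a + ϑ)} y^{−(1 − a)} dy ≤ C x^{−ε}. -/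
open MeasureTheory

/-- For `T > 0`, `a ∈ (0,1)`, `ϑ ≥ 0` and `ε ∈ (ϑ, a + ϑ)`, there is a finite constant
`C` such that `∫_0^T (y+x)^{-(a+ϑ)} y^{-(1-a)} dy ≤ C x^{-ε}` for all `x ∈ (0,T)`. -/
theorem integral_rpow_add_le (T a ϑ ε : ℝ) (hT : 0 < T) (ha : a ∈ Set.Ioo (0 : ℝ) 1)
    (hϑ : 0 ≤ ϑ) (hε : ε ∈ Set.Ioo ϑ (a + ϑ)) :
    ∃ C : ℝ, 0 < C ∧ ∀ x ∈ Set.Ioo (0 : ℝ) T,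
      (∫ y in Set.Ioo (0 : ℝ) T, (y + x) ^ (-(a + ϑ)) * y ^ (-(1 - a))) ≤ C * x ^ (-ε) := by
  obtain ⟨ha0, ha1⟩ := ha
  obtain ⟨hε1, hε2⟩ := hε
  set r : ℝ := ε - ϑ - 1 with hr_def
  have hr : (-1 : ℝ) < r := by simp [hr_def]; linarith
  have hIntr : IntegrableOn (fun y : ℝ => y ^ r) (Set.Ioo (0 : ℝ) T) := by
    have := (intervalIntegral.intervalIntegrable_rpow' (a := 0) (b := T) hr)
    exact this.1.mono_set Set.Ioo_subset_Ioc_self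
  set C : ℝ := ∫ y in Set.Ioo (0 : ℝ) T, y ^ r with hC_def
  have hCval : C = T ^ (r + 1) / (r + 1) := by
    rw [hC_def, ← MeasureTheory.integral_Ioc_eq_integral_Ioo,
      ← intervalIntegral.integral_of_le hT.le, integral_rpow (Or.inl hr)]
    rw [Real.zero_rpow (by linarith)]
    ring
  have hrpos : 0 < r + 1 := by linarith
  have hCpos : 0 < C := by
    rw [hCval]
    positivity
  refine ⟨C, hCpos, fun x hx => ?_⟩
  obtain ⟨hx0, hxT⟩ := hx
  have key : ∀ y ∈ Set.Ioo (0 : ℝ) T,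
      (y + x) ^ (-(a + ϑ)) * y ^ (-(1 - a)) ≤ x ^ (-ε) * y ^ r := by
    intro y hy
    obtain ⟨hy0, hyT⟩ := hy
    have hyx : 0 < y + x := by linarith
    have h1 : (y + x) ^ (-(a + ϑ)) = (y + x) ^ (-ε) * (y + x) ^ (-(a + ϑ - ε)) := by
      rw [← Real.rpow_add hyx]; ring_nf
    have h2 : (y + x) ^ (-ε) ≤ x ^ (-ε) :=
      Real.rpow_le_rpow_of_nonpos hx0 (by linarith) (by linarith)
    have h3 : (y + x) ^ (-(a + ϑ - ε)) ≤ y ^ (-(a + ϑ - ε)) :=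
      Real.rpow_le_rpow_of_nonpos hy0 (by linarith) (by linarith)
    have h4 : y ^ (-(a + ϑ - ε)) * y ^ (-(1 - a)) = y ^ r := by
      rw [← Real.rpow_add hy0, hr_def]; ring_nf
    calc (y + x) ^ (-(a + ϑ)) * y ^ (-(1 - a))
        = ((y + x) ^ (-ε) * (y + x) ^ (-(a + ϑ - ε))) * y ^ (-(1 - a)) := by rw [h1]
      _ ≤ (x ^ (-ε) * y ^ (-(a + ϑ - ε))) * y ^ (-(1 - a)) := by
          apply mul_le_mul_of_nonneg_right _ (Real.rpow_nonneg hy0.le _)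
          exact mul_le_mul h2 h3 (Real.rpow_nonneg hyx.le _) (Real.rpow_nonneg hx0.le _)
      _ = x ^ (-ε) * y ^ r := by rw [mul_assoc, h4]
  have hIntg : IntegrableOn (fun y : ℝ => x ^ (-ε) * y ^ r) (Set.Ioo (0 : ℝ) T) :=
    hIntr.const_mul _
  have hmeas : AEStronglyMeasurable (fun y : ℝ => (y + x) ^ (-(a + ϑ)) * y ^ (-(1 - a)))
      (volume.restrict (Set.Ioo (0 : ℝ) T)) := by
    have hcont : ContinuousOn (fun y : ℝ => (y + x) ^ (-(a + ϑ)) * y ^ (-(1 - a)))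
        (Set.Ioo (0 : ℝ) T) := by
      apply ContinuousOn.mul
      · apply ContinuousOn.rpow_const (continuous_id.add continuous_const).continuousOn
        intro y hy; left; have := hy.1; show y + x ≠ 0; positivity
      · apply ContinuousOn.rpow_const continuousOn_id
        intro y hy; left; exact ne_of_gt hy.1
    exact hcont.aestronglyMeasurable measurableSet_Ioo
  have hIntf : IntegrableOn (fun y : ℝ => (y + x) ^ (-(a + ϑ)) * y ^ (-(1 - a)))
      (Set.Ioo (0 : ℝ) T) := by
    apply Integrable.mono hIntg hmeas
    filter_upwards [ae_restrict_mem measurableSet_Ioo] with y hy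
    obtain ⟨hy0, hyT⟩ := hy
    have hyx : 0 < y + x := by linarith
    have hfnn : 0 ≤ (y + x) ^ (-(a + ϑ)) * y ^ (-(1 - a)) :=
      mul_nonneg (Real.rpow_nonneg hyx.le _) (Real.rpow_nonneg hy0.le _)
    have hgnn : 0 ≤ x ^ (-ε) * y ^ r :=
      mul_nonneg (Real.rpow_nonneg hx0.le _) (Real.rpow_nonneg hy0.le _)
    rw [Real.norm_eq_abs, Real.norm_eq_abs, abs_of_nonneg hfnn, abs_of_nonneg hgnn]
    exact key y ⟨hy0, hyT⟩
  calc (∫ y in Set.Ioo (0 : ℝ) T, (y + x) ^ (-(a + ϑ)) * y ^ (-(1 - a)))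
      ≤ ∫ y in Set.Ioo (0 : ℝ) T, x ^ (-ε) * y ^ r :=
        setIntegral_mono_on hIntf hIntg measurableSet_Ioo key
    _ = x ^ (-ε) * C := by rw [MeasureTheory.integral_const_mul]
    _ = C * x ^ (-ε) := mul_comm _ _
end

section
/- Let T ∈ (0, ∞), a ∈ (0, 1), ϑ ≥ 0, and ε ∈ (ϑ, a + ϑ). Then lim_{x → 0+} x^ε ∫_0^T (y + x)^{−(a + ϑ)} y^{−(1 − a)} dy = 0. -/
open MeasureTheory Filter

/-- For `T > 0`, `a ∈ (0,1)`, `ϑ ≥ 0` and `ε ∈ (ϑ, a + ϑ)`,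
`x^ε ∫_0^T (y+x)^{-(a+ϑ)} y^{-(1-a)} dy → 0` as `x → 0+`. -/
theorem tendsto_rpow_mul_integral_zero (T a ϑ ε : ℝ) (hT : 0 < T)
    (ha : a ∈ Set.Ioo (0 : ℝ) 1) (hϑ : 0 ≤ ϑ) (hε : ε ∈ Set.Ioo ϑ (a + ϑ)) :
    Tendsto
      (fun x : ℝ => x ^ ε * ∫ y in Set.Ioo (0 : ℝ) T, (y + x) ^ (-(a + ϑ)) * y ^ (-(1 - a)))
      (nhdsWithin 0 (Set.Ioi 0)) (nhds 0) := by
  have key : Tendsto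
      (fun x : ℝ => ∫ y in Set.Ioo (0 : ℝ) T, x ^ ε * ((y + x) ^ (-(a + ϑ)) * y ^ (-(1 - a))))
      (nhdsWithin 0 (Set.Ioi 0)) (nhds (∫ _y in Set.Ioo (0 : ℝ) T, (0:ℝ))) := by
    apply tendsto_integral_filter_of_dominated_convergence
      (fun y : ℝ => y ^ (ε - ϑ - 1))
    · filter_upwards with x
      apply Measurable.aestronglyMeasurable
      fun_prop
    · filter_upwards [self_mem_nhdsWithin] with x (hx : 0 < x)
      filter_upwards [ae_restrict_mem measurableSet_Ioo] with y hy
      obtain ⟨hy0, hyT⟩ := hy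
      have hyx : 0 < y + x := by linarith
      rw [Real.norm_eq_abs, abs_of_nonneg]
      · have h1 : x ^ ε ≤ (y + x) ^ ε := by
          exact Real.rpow_le_rpow hx.le (by linarith) (hϑ.trans_lt hε.1).le
        calc x ^ ε * ((y + x) ^ (-(a + ϑ)) * y ^ (-(1 - a)))
            ≤ (y + x) ^ ε * ((y + x) ^ (-(a + ϑ)) * y ^ (-(1 - a))) := by
              apply mul_le_mul_of_nonneg_right h1
              positivity
          _ = (y + x) ^ (ε - (a + ϑ)) * y ^ (-(1 - a)) := by
              rw [← mul_assoc, ← Real.rpow_add hyx]; ring_nf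
          _ ≤ y ^ (ε - (a + ϑ)) * y ^ (-(1 - a)) := by
              apply mul_le_mul_of_nonneg_right _ (by positivity)
              exact Real.rpow_le_rpow_of_nonpos hy0 (by linarith) (by linarith [hε.2])
          _ = y ^ (ε - ϑ - 1) := by
              rw [← Real.rpow_add hy0]; ring_nf
      · positivity
    · have : IntervalIntegrable (fun y : ℝ => y ^ (ε - ϑ - 1)) volume 0 T := by
        apply intervalIntegral.intervalIntegrable_rpow'
        linarith [hε.1]
      exact this.1.mono_set Set.Ioo_subset_Ioc_self
    · filter_upwards [ae_restrict_mem measurableSet_Ioo] with y hy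
      obtain ⟨hy0, hyT⟩ := hy
      have hxe : Tendsto (fun x : ℝ => x ^ ε) (nhdsWithin 0 (Set.Ioi 0)) (nhds 0) := by
        have hc : ContinuousWithinAt (fun x : ℝ => x ^ ε) (Set.Ioi 0) 0 := by
          apply (Real.continuousAt_rpow_const 0 ε (Or.inr (by linarith [hε.1]))).continuousWithinAt
        simpa [Real.zero_rpow (by linarith [hε.1] : ε ≠ 0)] using hc.tendsto
      have hrest : Tendsto (fun x : ℝ => (y + x) ^ (-(a + ϑ)) * y ^ (-(1 - a)))
          (nhdsWithin 0 (Set.Ioi 0)) (nhds ((y + 0) ^ (-(a + ϑ)) * y ^ (-(1 - a)))) := by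
        apply Tendsto.mono_left _ nhdsWithin_le_nhds
        exact (((continuous_const.add continuous_id).continuousAt).rpow_const
          (Or.inl (by simpa using hy0.ne'))).tendsto.mul tendsto_const_nhds
      simpa using hxe.mul hrest
  simp only [integral_zero] at key
  refine key.congr (fun x => ?_)
  rw [← integral_const_mul]
end
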